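/- Let H ~ Hyp(n,i,k) and X ~ Bin(k, i/n). Let H* denote H conditioned on the event {H ≥ i·k/n} and X* denote X conditioned on the event {X ≥ i·k/n}. Then H* is smaller than X* in the usual stochastic order, i.e. for every real t, P(H ≥ t | H ≥ i·k/n) ≤ P(X ≥ t | X ≥ i·k/n). -/

import Mathlib

/-- The probability mass function of the hypergeometric distribution `Hyp(n,i,k)`. -/
noncomputable def hypPMF (n i k j : ℕ) : ℝ :=
  ((Nat.choose i j : ℝ) * (Nat.choose (n - i) (k - j) : ℝ)) / (Nat.choose n k : ℝ)

/-- The probability mass function of the binomial distribution `Bin(k,p)`. -/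
noncomputable def binPMF (k : ℕ) (p : ℝ) (j : ℕ) : ℝ :=
  (Nat.choose k j : ℝ) * p ^ j * (1 - p) ^ (k - j)

/-- `P(H ≥ t)` for `H ~ Hyp(n,i,k)`. -/
noncomputable def hypTail (n i k : ℕ) (t : ℝ) : ℝ :=
  ∑ j ∈ Finset.range (k + 1), if t ≤ (j : ℝ) then hypPMF n i k j else 0

/-- `P(X ≥ t)` for `X ~ Bin(k,p)`. -/
noncomputable def binTail (k : ℕ) (p : ℝ) (t : ℝ) : ℝ :=
  ∑ j ∈ Finset.range (k + 1), if t ≤ (j : ℝ) then binPMF k p j else 0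

lemma natCore (j c d e : ℕ)
    (h : (j+1+d)*(j+c+1) ≤ j*(j+1+d+c+e)) :
    Nat.choose (j+1+d) (j+1) * Nat.choose (c+e) c * Nat.choose (j+c+1) j
      * (j+1+d)^j * (c+e)^(c+1)
    ≤ Nat.choose (j+1+d) j * Nat.choose (c+e) (c+1) * Nat.choose (j+c+1) (j+1)
      * (j+1+d)^(j+1) * (c+e)^c := by
  have core : (d+1)*(c+e) ≤ e*(j+1+d) := by nlinarith
  have e1 : Nat.choose (j+1+d) (j+1) * (j+1) = Nat.choose (j+1+d) j * (d+1) := by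
    rw [Nat.choose_succ_right_eq]; congr 1; omega
  have e2 : Nat.choose (c+e) (c+1) * (c+1) = Nat.choose (c+e) c * e := by
    rw [Nat.choose_succ_right_eq]; congr 1; omega
  have e3 : Nat.choose (j+c+1) (j+1) * (j+1) = Nat.choose (j+c+1) j * (c+1) := by
    rw [Nat.choose_succ_right_eq]; congr 1; omega
  apply Nat.le_of_mul_le_mul_right _ (show 0 < (j+1)*(c+1) by positivity)
  calc Nat.choose (j+1+d) (j+1) * Nat.choose (c+e) c * Nat.choose (j+c+1) j
      * (j+1+d)^j * (c+e)^(c+1) * ((j+1)*(c+1))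
      = (Nat.choose (j+1+d) (j+1) * (j+1)) *
        (Nat.choose (c+e) c * Nat.choose (j+c+1) j * (j+1+d)^j * (c+e)^c * (c+1)) * (c+e) := by
        rw [pow_succ]; ring
    _ = (Nat.choose (j+1+d) j * (d+1)) *
        (Nat.choose (c+e) c * Nat.choose (j+c+1) j * (j+1+d)^j * (c+e)^c * (c+1)) * (c+e) := by
        rw [e1]
    _ = (Nat.choose (j+1+d) j * Nat.choose (c+e) c * Nat.choose (j+c+1) j * (j+1+d)^j
          * (c+e)^c * (c+1)) * ((d+1)*(c+e)) := by ring
    _ ≤ (Nat.choose (j+1+d) j * Nat.choose (c+e) c * Nat.choose (j+c+1) j * (j+1+d)^j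
          * (c+e)^c * (c+1)) * (e*(j+1+d)) := Nat.mul_le_mul_left _ core
    _ = Nat.choose (j+1+d) j * (Nat.choose (c+e) c * e) * (Nat.choose (j+c+1) j * (c+1))
          * ((j+1+d)^j * (j+1+d)) * (c+e)^c := by ring
    _ = Nat.choose (j+1+d) j * (Nat.choose (c+e) (c+1) * (c+1))
          * (Nat.choose (j+c+1) (j+1) * (j+1)) * ((j+1+d)^j * (j+1+d)) * (c+e)^c := by
        rw [e2, e3]
    _ = Nat.choose (j+1+d) j * Nat.choose (c+e) (c+1) * Nat.choose (j+c+1) (j+1)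
      * (j+1+d)^(j+1) * (c+e)^c * ((j+1)*(c+1)) := by rw [pow_succ]; ring

lemma hyp_nonneg (n i k j : ℕ) : 0 ≤ hypPMF n i k j := by
  unfold hypPMF; positivity

lemma bin_nonneg (k : ℕ) (p : ℝ) (j : ℕ) (hp : 0 ≤ p) (hp1 : p ≤ 1) :
    0 ≤ binPMF k p j := by
  unfold binPMF
  have : 0 ≤ 1 - p := by linarith
  positivity

lemma step (n i k j : ℕ) (hn : 0 < n) (hi2 : i ≤ n) (hjk : j < k)
    (hcond : i * k ≤ j * n) :
    hypPMF n i k (j+1) * binPMF k ((i:ℝ)/n) j ≤ hypPMF n i k j * binPMF k ((i:ℝ)/n) (j+1) := by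
  have hp : (0:ℝ) ≤ (i:ℝ)/n := by positivity
  have hp1 : (i:ℝ)/n ≤ 1 := by
    rw [div_le_one (by exact_mod_cast hn)]; exact_mod_cast hi2
  have hrhs : 0 ≤ hypPMF n i k j * binPMF k ((i:ℝ)/n) (j+1) :=
    mul_nonneg (hyp_nonneg _ _ _ _) (bin_nonneg _ _ _ hp hp1)
  by_cases hij : i < j + 1
  · have h0 : Nat.choose i (j+1) = 0 := Nat.choose_eq_zero_of_lt hij
    unfold hypPMF; rw [h0]; simpa [hypPMF] using hrhs
  by_cases hni : n - i < k - (j+1)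
  · have h0 : Nat.choose (n-i) (k-(j+1)) = 0 := Nat.choose_eq_zero_of_lt hni
    unfold hypPMF; rw [h0]; simpa [hypPMF] using hrhs
  push_neg at hij hni
  obtain ⟨d, hd⟩ : ∃ d, i = j + 1 + d := ⟨i - (j+1), by omega⟩
  obtain ⟨c, hc⟩ : ∃ c, k = j + c + 1 := ⟨k - j - 1, by omega⟩
  obtain ⟨e, he⟩ : ∃ e, n = j + 1 + d + c + e := ⟨n - (j+1+d+c), by omega⟩
  subst hd hc he
  have key := natCore j c d e (by omega)
  have keyR : (Nat.choose (j+1+d) (j+1) * Nat.choose (c+e) c * Nat.choose (j+c+1) j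
      * (j+1+d)^j * (c+e)^(c+1) : ℝ)
    ≤ (Nat.choose (j+1+d) j * Nat.choose (c+e) (c+1) * Nat.choose (j+c+1) (j+1)
      * (j+1+d)^(j+1) * (c+e)^c : ℝ) := by exact_mod_cast key
  unfold hypPMF binPMF
  have hsub1 : j + 1 + d + c + e - (j + 1 + d) = c + e := by omega
  have hsub2 : j + c + 1 - (j + 1) = c := by omega
  have hsub3 : j + c + 1 - j = c + 1 := by omega
  rw [hsub1, hsub2, hsub3]
  have hCk : (0:ℝ) < (Nat.choose (j+1+d+c+e) (j+c+1) : ℝ) := by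
    exact_mod_cast Nat.choose_pos (by omega)
  have hCk' : (Nat.choose (j+1+d+c+e) (j+c+1) : ℝ) ≠ 0 := ne_of_gt hCk
  have hN : (0:ℝ) < (↑(j+1+d+c+e) : ℝ) := by positivity
  have hN' : (↑(j+1+d+c+e) : ℝ) ≠ 0 := ne_of_gt hN
  have hD : (0:ℝ) < (Nat.choose (j+1+d+c+e) (j+c+1) : ℝ) * (↑(j+1+d+c+e):ℝ)^(j+c+1) :=
    by positivity
  have hone : (1:ℝ) - (↑(j+1+d) : ℝ)/(↑(j+1+d+c+e):ℝ) = (↑(c+e):ℝ)/(↑(j+1+d+c+e):ℝ) := by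
    field_simp
    push_cast
    ring
  rw [hone]
  calc (Nat.choose (j+1+d) (j+1) : ℝ) * (Nat.choose (c+e) c : ℝ) / (Nat.choose (j+1+d+c+e) (j+c+1) : ℝ)
      * ((Nat.choose (j+c+1) j : ℝ) * ((↑(j+1+d):ℝ)/(↑(j+1+d+c+e):ℝ))^j * ((↑(c+e):ℝ)/(↑(j+1+d+c+e):ℝ))^(c+1))
      = ((Nat.choose (j+1+d) (j+1) : ℝ) * (Nat.choose (c+e) c : ℝ) * (Nat.choose (j+c+1) j : ℝ)
          * (↑(j+1+d):ℝ)^j * (↑(c+e):ℝ)^(c+1))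
        / ((Nat.choose (j+1+d+c+e) (j+c+1) : ℝ) * (↑(j+1+d+c+e):ℝ)^(j+c+1)) := by
        rw [div_pow, div_pow]
        field_simp
        ring
    _ ≤ ((Nat.choose (j+1+d) j : ℝ) * (Nat.choose (c+e) (c+1) : ℝ) * (Nat.choose (j+c+1) (j+1) : ℝ)
          * (↑(j+1+d):ℝ)^(j+1) * (↑(c+e):ℝ)^c)
        / ((Nat.choose (j+1+d+c+e) (j+c+1) : ℝ) * (↑(j+1+d+c+e):ℝ)^(j+c+1)) := by
        rw [div_le_div_iff_of_pos_right hD]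
        push_cast at keyR ⊢
        linarith
    _ = (Nat.choose (j+1+d) j : ℝ) * (Nat.choose (c+e) (c+1) : ℝ) / (Nat.choose (j+1+d+c+e) (j+c+1) : ℝ)
      * ((Nat.choose (j+c+1) (j+1) : ℝ) * ((↑(j+1+d):ℝ)/(↑(j+1+d+c+e):ℝ))^(j+1) * ((↑(c+e):ℝ)/(↑(j+1+d+c+e):ℝ))^c) := by
        rw [div_pow, div_pow]
        field_simp
        ring

lemma cross_of_step (a b : ℕ → ℝ) (k L : ℕ)
    (hb : ∀ j, j ≤ k → 0 < b j)
    (hstep : ∀ j, L ≤ j → j + 1 ≤ k → a (j+1) * b j ≤ a j * b (j+1)) :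
    ∀ d j, L ≤ j → j + d ≤ k → a (j+d) * b j ≤ a j * b (j+d) := by
  intro d
  induction d with
  | zero => intro j _ _; exact le_of_eq (by ring)
  | succ d ih =>
    intro j hL hjd
    have h1 := hstep (j+d) (by omega) (by omega)
    have h2 := ih j hL (by omega)
    have hbj := hb j (by omega)
    have hbjd := hb (j+d) (by omega)
    have hbjd1 := hb (j+d+1) (by omega)
    have key : a (j+d+1) * b j * b (j+d) ≤ a j * b (j+d+1) * b (j+d) := by
      nlinarith [mul_le_mul_of_nonneg_right h1 hbj.le,
        mul_le_mul_of_nonneg_right h2 hbjd1.le]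
    have : a (j+d+1) * b j ≤ a j * b (j+d+1) := le_of_mul_le_mul_right key hbjd
    exact this

lemma tail_cross (a b : ℕ → ℝ) (k L u : ℕ) (hLu : L ≤ u)
    (ha : ∀ j, 0 ≤ a j) (hb : ∀ j, 0 ≤ b j)
    (cross : ∀ j j', L ≤ j → j ≤ j' → j' ≤ k → a j' * b j ≤ a j * b j') :
    (∑ j ∈ Finset.Ico u (k+1), a j) * (∑ j ∈ Finset.Ico L (k+1), b j)
    ≤ (∑ j ∈ Finset.Ico L (k+1), a j) * (∑ j ∈ Finset.Ico u (k+1), b j) := by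
  by_cases hu : u ≤ k + 1
  · rw [← Finset.sum_Ico_consecutive a hLu hu, ← Finset.sum_Ico_consecutive b hLu hu]
    have key : (∑ j ∈ Finset.Ico u (k+1), a j) * (∑ j ∈ Finset.Ico L u, b j)
        ≤ (∑ j ∈ Finset.Ico L u, a j) * (∑ j ∈ Finset.Ico u (k+1), b j) := by
      rw [Finset.sum_mul_sum, Finset.sum_mul_sum]
      rw [Finset.sum_comm]
      apply Finset.sum_le_sum
      intro j hj
      apply Finset.sum_le_sum
      intro j' hj'
      rw [Finset.mem_Ico] at hj hj'
      exact cross j j' hj.1 (by omega) (by omega)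
    have hA : 0 ≤ ∑ j ∈ Finset.Ico u (k+1), a j := Finset.sum_nonneg fun j _ => ha j
    have hB : 0 ≤ ∑ j ∈ Finset.Ico u (k+1), b j := Finset.sum_nonneg fun j _ => hb j
    nlinarith [key]
  · rw [Finset.Ico_eq_empty (show ¬ u < k + 1 by omega)]
    simp
    
lemma tail_eq (f : ℕ → ℝ) (k : ℕ) (t : ℝ) :
    (∑ j ∈ Finset.range (k+1), if t ≤ (j:ℝ) then f j else 0)
      = ∑ j ∈ Finset.Ico ⌈t⌉₊ (k+1), f j := by
  rw [← Finset.sum_filter]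
  congr 1
  ext j
  simp only [Finset.mem_filter, Finset.mem_range, Finset.mem_Ico, Nat.ceil_le, and_comm]

/-- Let `H ~ Hyp(n,i,k)` and `X ~ Bin(k, i/n)`.  Then `H` conditioned on
`{H ≥ i·k/n}` is smaller, in the usual stochastic order, than `X` conditioned on
`{X ≥ i·k/n}`: for every real `t`,
`P(H ≥ t | H ≥ i·k/n) ≤ P(X ≥ t | X ≥ i·k/n)`.
Here `P(H ≥ t | H ≥ m) = P(H ≥ max t m)/P(H ≥ m)`. -/
theorem hyp_cond_st_bin_cond (n i k : ℕ) (hn : 0 < n)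
    (hi1 : 1 ≤ i) (hi2 : i ≤ n) (hk1 : 1 ≤ k) (hk2 : k ≤ n) (t : ℝ) :
    hypTail n i k (max t ((i : ℝ) * k / n)) / hypTail n i k ((i : ℝ) * k / n)
      ≤ binTail k ((i : ℝ) / n) (max t ((i : ℝ) * k / n)) /
          binTail k ((i : ℝ) / n) ((i : ℝ) * k / n) := by
  have hnR : (0:ℝ) < n := by exact_mod_cast hn
  by_cases hin : i = n
  · -- degenerate case: i = n, the two distributions coincide
    subst hin
    have hpmf : ∀ j, j ≤ k → hypPMF i i k j = binPMF k ((i:ℝ)/i) j := by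
      intro j hj
      have hp1 : (i:ℝ)/i = 1 := div_self (ne_of_gt hnR)
      unfold hypPMF binPMF
      rw [hp1]
      rcases eq_or_lt_of_le hj with h | h
      · subst h
        simp [Nat.sub_self, Nat.choose_self]
        exact_mod_cast Nat.choose_pos hk2 |>.ne'
      · have h1 : Nat.choose (i - i) (k - j) = 0 := by
          have : 0 < k - j := by omega
          exact Nat.choose_eq_zero_of_lt (by omega)
        rw [h1]
        have h2 : ((1:ℝ) - 1) ^ (k - j) = 0 := by
          rw [sub_self]; exact zero_pow (by omega)
        rw [h2]
        simp
    have htail : ∀ s : ℝ, hypTail i i k s = binTail k ((i:ℝ)/i) s := by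
      intro s
      unfold hypTail binTail
      apply Finset.sum_congr rfl
      intro j hj
      rw [Finset.mem_range] at hj
      rw [hpmf j (by omega)]
    rw [htail, htail]
  · -- main case: i < n
    have hiltn : i < n := lt_of_le_of_ne hi2 hin
    set m : ℝ := (i : ℝ) * k / n with hm
    set s : ℝ := max t m with hs
    have hms : m ≤ s := le_max_right _ _
    set L : ℕ := ⌈m⌉₊ with hL
    set u : ℕ := ⌈s⌉₊ with hu
    have hLu : L ≤ u := Nat.ceil_le_ceil hms
    have hmk : m ≤ (k:ℝ) := by
      rw [hm, div_le_iff₀ hnR]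
      have : (i:ℝ) ≤ n := by exact_mod_cast hi2
      nlinarith [show (0:ℝ) ≤ (k:ℝ) by positivity]
    have hLk : L ≤ k := Nat.ceil_le.mpr hmk
    have hp : (0:ℝ) ≤ (i:ℝ)/n := by positivity
    have hp1 : (i:ℝ)/n ≤ 1 := by
      rw [div_le_one hnR]; exact_mod_cast hi2
    have hbpos : ∀ j, j ≤ k → 0 < binPMF k ((i:ℝ)/n) j := by
      intro j hj
      unfold binPMF
      have h1 : (0:ℝ) < Nat.choose k j := by exact_mod_cast Nat.choose_pos hj
      have h2 : (0:ℝ) < (i:ℝ)/n := by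
        apply div_pos _ hnR; exact_mod_cast hi1
      have h3 : (0:ℝ) < 1 - (i:ℝ)/n := by
        rw [sub_pos, div_lt_one hnR]; exact_mod_cast hiltn
      positivity
    have hcond : ∀ j : ℕ, L ≤ j → i * k ≤ j * n := by
      intro j hj
      have : m ≤ (j:ℝ) := Nat.ceil_le.mp hj
      rw [hm, div_le_iff₀ hnR] at this
      exact_mod_cast this
    have hstep : ∀ j, L ≤ j → j + 1 ≤ k →
        hypPMF n i k (j+1) * binPMF k ((i:ℝ)/n) j
          ≤ hypPMF n i k j * binPMF k ((i:ℝ)/n) (j+1) :=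
      fun j hj hjk => step n i k j hn hi2 (by omega) (hcond j hj)
    have cross : ∀ j j', L ≤ j → j ≤ j' → j' ≤ k →
        hypPMF n i k j' * binPMF k ((i:ℝ)/n) j
          ≤ hypPMF n i k j * binPMF k ((i:ℝ)/n) j' := by
      intro j j' hLj hjj' hj'k
      have := cross_of_step (hypPMF n i k) (binPMF k ((i:ℝ)/n)) k L hbpos hstep
        (j' - j) j hLj (by omega)
      have hjj : j + (j' - j) = j' := by omega
      rwa [hjj] at this
    have eA : ∀ r : ℝ, hypTail n i k r = ∑ j ∈ Finset.Ico ⌈r⌉₊ (k+1), hypPMF n i k j :=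
      fun r => tail_eq _ _ _
    have eB : ∀ r : ℝ, binTail k ((i:ℝ)/n) r
        = ∑ j ∈ Finset.Ico ⌈r⌉₊ (k+1), binPMF k ((i:ℝ)/n) j :=
      fun r => tail_eq _ _ _
    rw [eA, eA, eB, eB]
    have hBL : 0 < ∑ j ∈ Finset.Ico L (k+1), binPMF k ((i:ℝ)/n) j := by
      apply Finset.sum_pos
      · intro j hj
        rw [Finset.mem_Ico] at hj
        exact hbpos j (by omega)
      · exact ⟨k, Finset.mem_Ico.mpr ⟨hLk, by omega⟩⟩
    have hANN : ∀ (v : ℕ), 0 ≤ ∑ j ∈ Finset.Ico v (k+1), hypPMF n i k j :=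
      fun v => Finset.sum_nonneg fun j _ => hyp_nonneg _ _ _ _
    have hBNN : ∀ (v : ℕ), 0 ≤ ∑ j ∈ Finset.Ico v (k+1), binPMF k ((i:ℝ)/n) j :=
      fun v => Finset.sum_nonneg fun j _ => bin_nonneg _ _ _ hp hp1
    rcases eq_or_lt_of_le (hANN L) with hAL | hAL
    · -- hypTail at m is zero; then so is the one at s
      have hsub : Finset.Ico u (k+1) ⊆ Finset.Ico L (k+1) :=
        Finset.Ico_subset_Ico hLu le_rfl
      have hAu : (∑ j ∈ Finset.Ico u (k+1), hypPMF n i k j) = 0 := by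
        have h1 : (∑ j ∈ Finset.Ico u (k+1), hypPMF n i k j)
            ≤ ∑ j ∈ Finset.Ico L (k+1), hypPMF n i k j :=
          Finset.sum_le_sum_of_subset_of_nonneg hsub fun j _ _ => hyp_nonneg _ _ _ _
        have h2 := hANN u
        linarith [h1, h2, hAL]
      rw [hAu, ← hAL]
      simp only [zero_div]
      exact div_nonneg (hBNN u) hBL.le
    · rw [div_le_div_iff₀ hAL hBL]
      have := tail_cross (hypPMF n i k) (binPMF k ((i:ℝ)/n)) k L u hLu
        (fun j => hyp_nonneg _ _ _ _) (fun j => bin_nonneg _ _ _ hp hp1) cross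
      linarith [this]
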